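/- Let Γ be a digraph with a vertex-transitive automorphism group that acts s-arc-transitively for some s ≥ 2, and let L be a nontrivial normal subgroup of G ≤ Aut(Γ) that acts transitively on the vertex set. If G acts s-arc-transitively on Γ, then L acts (s-1)-arc-transitively on Γ. -/

import Mathlib

/-- `a` is an `s`-arc of the digraph relation `r` (only the first `s+1` terms matter). -/
def IsSArc {V : Type*} (r : V → V → Prop) (s : ℕ) (a : ℕ → V) : Prop :=
  ∀ i < s, r (a i) (a (i + 1))

/-- A subgroup `H` of `Equiv.Perm V` acts `s`-arc-transitively on the digraph `(V, r)`. -/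
def SubgroupSArcTransitive {V : Type*} (r : V → V → Prop) (s : ℕ)
    (H : Subgroup (Equiv.Perm V)) : Prop :=
  ∀ a b : ℕ → V, IsSArc r s a → IsSArc r s b → ∃ g ∈ H, ∀ i ≤ s, g (a i) = b i

/-- If `G` acts `s`-arc-transitively (`s ≥ 2`) on a digraph and `L` is a nontrivial
normal subgroup of `G` that is vertex-transitive, then `L` is `(s-1)`-arc-transitive. -/
theorem normal_vertex_transitive_subgroup_sArcTransitive {V : Type*}
    (r : V → V → Prop)
    (hirr : ∀ v : V, ¬ r v v) (hanti : ∀ a b : V, r a b → ¬ r b a)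
    (G L : Subgroup (Equiv.Perm V))
    (hpres : ∀ g ∈ G, ∀ a b : V, r a b ↔ r (g a) (g b))
    (hLG : L ≤ G) (hnorm : ∀ g ∈ G, ∀ l ∈ L, g * l * g⁻¹ ∈ L) (hL : L ≠ ⊥)
    (s : ℕ) (hs : 2 ≤ s)
    (hGtrans : ∀ v w : V, ∃ g ∈ G, g v = w)
    (hLtrans : ∀ v w : V, ∃ l ∈ L, l v = w)
    (hGs : SubgroupSArcTransitive r s G) :
    SubgroupSArcTransitive r (s - 1) L := by
  obtain ⟨t, rfl⟩ : ∃ t, s = t + 1 := ⟨s - 1, by omega⟩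
  have ht : 1 ≤ t := by omega
  simp only [Nat.add_sub_cancel]
  -- Shift lemma: any s-arc can be shifted by one by an element of L.
  have shift : ∀ b : ℕ → V, IsSArc r (t + 1) b →
      ∃ l ∈ L, ∀ i < t + 1, l (b i) = b (i + 1) := by
    intro b hb
    have hrb : r (b 0) (b 1) := hb 0 (by omega)
    obtain ⟨l, hlL, hl⟩ := hLtrans (b 0) (b 1)
    set a : ℕ → V := fun i => (l ^ i) (b 0) with ha
    have hstep : ∀ i, l (a i) = a (i + 1) := by
      intro i
      simp only [ha, pow_succ, Equiv.Perm.mul_apply]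
      have : ∀ j, (l ^ j) (l (b 0)) = l ((l ^ j) (b 0)) := by
        intro j
        rw [← Equiv.Perm.mul_apply, ← Equiv.Perm.mul_apply, ← pow_succ, ← pow_succ']
      rw [← this i]
    have hpow : ∀ i, a (i + 1) = (l ^ i) (b 1) := by
      intro i
      simp only [ha]
      rw [pow_succ, Equiv.Perm.mul_apply, hl]
    have haArc : IsSArc r (t + 1) a := by
      intro i _
      rw [hpow]
      exact (hpres (l ^ i) (Subgroup.pow_mem G (hLG hlL) i) (b 0) (b 1)).mp hrb
    obtain ⟨g, hgG, hg⟩ := hGs a b haArc hb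
    refine ⟨g * l * g⁻¹, hnorm g hgG l hlL, ?_⟩
    intro i hi
    have h1 : g⁻¹ (b i) = a i := by
      rw [← hg i (by omega), ← Equiv.Perm.mul_apply, inv_mul_cancel, Equiv.Perm.one_apply]
    calc (g * l * g⁻¹) (b i) = g (l (g⁻¹ (b i))) := rfl
      _ = g (a (i + 1)) := by rw [h1, hstep]
      _ = b (i + 1) := hg (i + 1) (by omega)
  intro x y hx hy
  obtain ⟨n, hnL, hn⟩ := hLtrans (x t) (y 0)
  set u : ℕ → V := fun j => if j ≤ t then n (x j) else y (j - t) with hu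
  have hut : ∀ j, t ≤ j → u j = y (j - t) := by
    intro j hj
    rcases eq_or_lt_of_le hj with h | h
    · simp [hu, ← h, hn]
    · simp [hu, Nat.not_le.mpr h]
  have huArc : IsSArc r (2 * t) u := by
    intro j hj
    rcases lt_or_ge j t with h | h
    · have h1 : u j = n (x j) := by simp [hu, le_of_lt h]
      have h2 : u (j + 1) = n (x (j + 1)) := by
        simp only [hu]; rw [if_pos (by omega : j + 1 ≤ t)]
      rw [h1, h2]
      exact (hpres n (hLG hnL) _ _).mp (hx j h)
    · rw [hut j h, hut (j + 1) (by omega)]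
      have hje : j + 1 - t = (j - t) + 1 := by omega
      rw [hje]
      exact hy (j - t) (by omega)
  -- compose shifts along u
  have chain : ∀ k, k ≤ t → ∃ m ∈ L, ∀ i ≤ t, m (u i) = u (i + k) := by
    intro k
    induction k with
    | zero => exact fun _ => ⟨1, one_mem L, fun i _ => by simp⟩
    | succ k ih =>
      intro hk
      obtain ⟨m, hmL, hm⟩ := ih (by omega)
      have hwin : IsSArc r (t + 1) (fun i => u (i + k)) := by
        intro i hi
        have h := huArc (i + k) (by omega)
        have : i + k + 1 = i + 1 + k := by omega
        rwa [this] at h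
      obtain ⟨l', hl'L, hl'⟩ := shift _ hwin
      refine ⟨l' * m, mul_mem hl'L hmL, fun i hi => ?_⟩
      have h := hl' i (by omega)
      calc (l' * m) (u i) = l' (m (u i)) := rfl
        _ = l' (u (i + k)) := by rw [hm i hi]
        _ = u (i + (k + 1)) := by rw [h]; congr 1; omega
  obtain ⟨m, hmL, hm⟩ := chain t le_rfl
  refine ⟨m * n, mul_mem hmL hnL, fun i hi => ?_⟩
  have h1 : u i = n (x i) := by simp [hu, hi]
  calc (m * n) (x i) = m (n (x i)) := rfl
    _ = m (u i) := by rw [h1]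
    _ = u (i + t) := hm i hi
    _ = y i := by rw [hut (i + t) (by omega)]; congr 1; omega
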